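/- Let A, B be n×n positive definite matrices and a, b > 0. Then a²A + b²B + 2ab(A ♮ B) = W_{a,b}(A,B) if and only if A and B commute. -/

import Mathlib

open Matrix ComplexOrder

namespace Matrix.PosSemidef

/-- Port: `Matrix.PosSemidef.sqrt` was removed from Mathlib; restored with its old definition. -/
noncomputable def sqrt {𝕜 : Type*} [RCLike 𝕜] {m : Type*} [Fintype m] [DecidableEq m]
    {A : Matrix m m 𝕜} (hA : A.PosSemidef) : Matrix m m 𝕜 :=
  hA.1.eigenvectorUnitary.1 * diagonal ((↑) ∘ (·.sqrt) ∘ hA.1.eigenvalues) *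
    (star hA.1.eigenvectorUnitary : Matrix m m 𝕜)

lemma posSemidef_sqrt {𝕜 : Type*} [RCLike 𝕜] {m : Type*} [Fintype m] [DecidableEq m]
    {A : Matrix m m 𝕜} (hA : A.PosSemidef) : PosSemidef hA.sqrt := by
  apply PosSemidef.mul_mul_conjTranspose_same
  refine posSemidef_diagonal_iff.mpr fun i ↦ ?_
  rw [Function.comp_apply, RCLike.nonneg_iff]
  constructor
  · simp only [Function.comp_apply, RCLike.ofReal_re]; exact Real.sqrt_nonneg _
  · simp only [Function.comp_apply, RCLike.ofReal_im]

lemma sqrt_mul_self {𝕜 : Type*} [RCLike 𝕜] {m : Type*} [Fintype m] [DecidableEq m]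
    {A : Matrix m m 𝕜} (hA : A.PosSemidef) : hA.sqrt * hA.sqrt = A := by
  have hU : (star hA.1.eigenvectorUnitary : Matrix m m 𝕜) * hA.1.eigenvectorUnitary.1 = 1 :=
    Unitary.star_mul_self_of_mem hA.1.eigenvectorUnitary.2
  have hD : diagonal (((↑) ∘ (·.sqrt) ∘ hA.1.eigenvalues) : m → 𝕜) *
      diagonal ((↑) ∘ (·.sqrt) ∘ hA.1.eigenvalues) = diagonal (RCLike.ofReal ∘ hA.1.eigenvalues) := by
    rw [diagonal_mul_diagonal]
    congr 1
    ext i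
    simp only [Function.comp_apply, ← RCLike.ofReal_mul, Real.mul_self_sqrt (hA.eigenvalues_nonneg i)]
  conv_rhs => rw [hA.1.spectral_theorem, Unitary.conjStarAlgAut_apply]
  unfold sqrt
  rw [← hD]
  simp only [Matrix.mul_assoc]
  rw [← Matrix.mul_assoc (star _ : Matrix m m 𝕜) _ (_ * _), hU, Matrix.one_mul]

end Matrix.PosSemidef

namespace Heron

variable {n : ℕ}

def WeakMaj {n : ℕ} (x y : Fin n → ℝ) : Prop :=
  ∀ s : Finset (Fin n), ∃ t : Finset (Fin n),
    t.card = s.card ∧ ∑ i ∈ s, x i ≤ ∑ i ∈ t, y i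

def Maj {n : ℕ} (x y : Fin n → ℝ) : Prop :=
  WeakMaj x y ∧ ∑ i, x i = ∑ i, y i

lemma sandwich_posSemidef {S T : Matrix (Fin n) (Fin n) ℂ} (hS : S.IsHermitian)
    (hT : T.PosSemidef) : (S * T * S).PosSemidef := by
  have h := hT.mul_mul_conjTranspose_same S
  rwa [hS.eq] at h

noncomputable def geomMean {A B : Matrix (Fin n) (Fin n) ℂ}
    (hA : A.PosDef) (hB : B.PosDef) : Matrix (Fin n) (Fin n) ℂ :=
  hA.posSemidef.sqrt *
    (sandwich_posSemidef hA.posSemidef.posSemidef_sqrt.isHermitian.inv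
        hB.posSemidef).sqrt *
    hA.posSemidef.sqrt

lemma geomMean_posSemidef {A B : Matrix (Fin n) (Fin n) ℂ}
    (hA : A.PosDef) (hB : B.PosDef) : (geomMean hA hB).PosSemidef :=
  sandwich_posSemidef hA.posSemidef.posSemidef_sqrt.isHermitian
    (Matrix.PosSemidef.posSemidef_sqrt _)

noncomputable def specMean {A B : Matrix (Fin n) (Fin n) ℂ}
    (hA : A.PosDef) (hB : B.PosDef) : Matrix (Fin n) (Fin n) ℂ :=
  (geomMean_posSemidef hA.inv hB).sqrt * A * (geomMean_posSemidef hA.inv hB).sqrt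

def HasPosSpectrum (M : Matrix (Fin n) (Fin n) ℂ) : Prop :=
  ∀ z ∈ spectrum ℂ M, 0 < z.re ∧ z.im = 0

def IsPrincipalSqrt (M S : Matrix (Fin n) (Fin n) ℂ) : Prop :=
  S * S = M ∧ HasPosSpectrum S

noncomputable def absMat (Y : Matrix (Fin n) (Fin n) ℂ) : Matrix (Fin n) (Fin n) ℂ :=
  (Matrix.posSemidef_conjTranspose_mul_self Y).sqrt

noncomputable def posPart (H : Matrix (Fin n) (Fin n) ℂ) : Matrix (Fin n) (Fin n) ℂ :=
  ((1 : ℂ) / 2) • (absMat H + H)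

/-! ### Auxiliary lemmas -/

lemma posDef_of_isUnit {M : Matrix (Fin n) (Fin n) ℂ} (hM : M.PosSemidef) (hu : IsUnit M) :
    M.PosDef := by
  refine PosDef.of_dotProduct_mulVec_pos hM.1 fun x hx =>
    lt_of_le_of_ne (hM.dotProduct_mulVec_nonneg x) fun h0 => ?_
  have hMx : M *ᵥ x ≠ 0 :=
    (Matrix.mulVec_injective_iff_isUnit.mpr hu).ne_iff' (Matrix.mulVec_zero M) |>.mpr hx
  have hsq : star x ⬝ᵥ M *ᵥ x = star (hM.sqrt *ᵥ x) ⬝ᵥ (hM.sqrt *ᵥ x) := by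
    conv_lhs => rw [← hM.sqrt_mul_self]
    rw [← Matrix.mulVec_mulVec, star_mulVec, Matrix.dotProduct_mulVec, hM.posSemidef_sqrt.1]
  have hz : hM.sqrt *ᵥ x = 0 := by
    rw [← dotProduct_star_self_eq_zero (v := hM.sqrt *ᵥ x), ← hsq, ← h0]
  apply hMx
  rw [← hM.sqrt_mul_self, ← Matrix.mulVec_mulVec, hz, Matrix.mulVec_zero]

lemma sqrt_isUnit {M : Matrix (Fin n) (Fin n) ℂ} (hM : M.PosSemidef) (hu : IsUnit M) :
    IsUnit hM.sqrt := by
  rw [Matrix.isUnit_iff_isUnit_det] at hu ⊢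
  rw [← hM.sqrt_mul_self, Matrix.det_mul] at hu
  exact isUnit_of_mul_isUnit_left hu

lemma sqrt_posDef {M : Matrix (Fin n) (Fin n) ℂ} (hM : M.PosDef) :
    (hM.posSemidef).sqrt.PosDef :=
  posDef_of_isUnit hM.posSemidef.posSemidef_sqrt (sqrt_isUnit hM.posSemidef hM.isUnit)

lemma hasPosSpectrum_of_posDef {M : Matrix (Fin n) (Fin n) ℂ} (hM : M.PosDef) :
    HasPosSpectrum M := by
  intro z hz
  rw [spectrum.mem_iff, Algebra.algebraMap_eq_smul_one, Matrix.isUnit_iff_isUnit_det,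
    isUnit_iff_ne_zero, not_not] at hz
  obtain ⟨v, hv, hv0⟩ := Matrix.exists_mulVec_eq_zero_iff.mpr hz
  have hMv : M *ᵥ v = z • v := by
    have h := hv0
    rw [Matrix.sub_mulVec, sub_eq_zero, Matrix.smul_mulVec, Matrix.one_mulVec] at h
    exact h.symm
  have hpos := hM.dotProduct_mulVec_pos hv
  rw [hMv] at hpos
  have hc : (0 : ℂ) < star v ⬝ᵥ v := Matrix.dotProduct_star_self_pos_iff.mpr hv
  rw [dotProduct_smul] at hpos
  rw [Complex.lt_def] at hpos hc
  simp only [Complex.zero_re, Complex.zero_im, smul_eq_mul, Complex.mul_re,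
    Complex.mul_im] at hpos hc
  obtain ⟨hc1, hc2⟩ := hc
  obtain ⟨hp1, hp2⟩ := hpos
  rw [← hc2] at hp1 hp2
  simp only [mul_zero, sub_zero, add_zero, zero_mul] at hp1 hp2
  constructor
  · nlinarith
  · nlinarith

lemma hasPosSpectrum_conj {M g : Matrix (Fin n) (Fin n) ℂ} (hg : IsUnit g)
    (h : HasPosSpectrum M) : HasPosSpectrum (g * M * g⁻¹) := by
  intro z hz
  apply h
  rwa [← hg.unit_spec, ← Matrix.coe_units_inv, spectrum.units_conjugate] at hz

open Polynomial in
lemma eval_charpoly' (M : Matrix (Fin n) (Fin n) ℂ) (μ : ℂ) :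
    M.charpoly.eval μ = (μ • (1 : Matrix (Fin n) (Fin n) ℂ) - M).det := by
  rw [Matrix.charpoly, ← Polynomial.coe_evalRingHom, RingHom.map_det]
  congr 1
  ext i j
  by_cases h : i = j <;>
    simp [h, Matrix.charmatrix_apply, Matrix.one_apply, Matrix.diagonal_apply]

lemma root_mem_spectrum {M : Matrix (Fin n) (Fin n) ℂ} {μ : ℂ}
    (h : μ ∈ M.charpoly.roots) : μ ∈ spectrum ℂ M := by
  have hroot : M.charpoly.eval μ = 0 := Polynomial.isRoot_of_mem_roots h
  rw [eval_charpoly'] at hroot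
  rw [spectrum.mem_iff, Algebra.algebraMap_eq_smul_one, Matrix.isUnit_iff_isUnit_det,
    isUnit_iff_ne_zero, not_not]
  exact hroot

open Polynomial in
lemma sqrt_unique {P Q : Matrix (Fin n) (Fin n) ℂ} (hP : HasPosSpectrum P)
    (hQ : HasPosSpectrum Q) (h : P * P = Q * Q) : P = Q := by
  set D := P - Q with hD
  have hPD : D * Q = (-P) * D := by
    have e : P * D + D * Q = P * P - Q * Q := by rw [hD, mul_sub, sub_mul]; abel
    rw [h, sub_self] at e
    have e2 := eq_neg_of_add_eq_zero_right e
    rw [e2]; noncomm_ring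
  have hpow : ∀ k : ℕ, D * Q ^ k = (-P) ^ k * D := by
    intro k
    induction k with
    | zero => simp
    | succ k ih =>
      rw [pow_succ, ← mul_assoc, ih, mul_assoc, hPD]
      rw [pow_succ, mul_assoc]
  have haeval : ∀ p : ℂ[X], D * (aeval Q p) = (aeval (-P) p) * D := by
    intro p
    induction p using Polynomial.induction_on' with
    | add p q hp hq => rw [map_add, map_add, mul_add, add_mul, hp, hq]
    | monomial k a =>
      rw [Polynomial.aeval_monomial, Polynomial.aeval_monomial, Algebra.algebraMap_eq_smul_one,
        smul_one_mul, smul_one_mul, Matrix.mul_smul, hpow, Matrix.smul_mul]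
  have key : (aeval (-P) Q.charpoly) * D = 0 := by
    rw [← haeval, Matrix.aeval_self_charpoly, mul_zero]
  have hsplit : Q.charpoly = (Q.charpoly.roots.toList.map fun μ => X - C μ).prod := by
    conv_lhs => rw [(IsAlgClosed.splits Q.charpoly).eq_prod_roots_of_monic Q.charpoly_monic, ← Multiset.coe_toList Q.charpoly.roots]
    rw [Multiset.map_coe, Multiset.prod_coe]
  have hunit : IsUnit (aeval (-P) Q.charpoly) := by
    rw [hsplit, map_list_prod]
    apply List.prod_isUnit
    intro m hm
    rw [List.map_map] at hm
    obtain ⟨μ, hμ, rfl⟩ := List.mem_map.mp hm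
    have hμs : μ ∈ spectrum ℂ Q := root_mem_spectrum (Multiset.mem_toList.mp hμ)
    have hμre : 0 < μ.re := (hQ μ hμs).1
    have heval : (aeval (-P)) ((fun μ => X - C μ) μ)
        = (-μ) • (1 : Matrix (Fin n) (Fin n) ℂ) - P := by
      simp [Algebra.algebraMap_eq_smul_one]
      module
    rw [Function.comp_apply, heval]
    by_contra hnu
    have hms : -μ ∈ spectrum ℂ P := by
      rw [spectrum.mem_iff, Algebra.algebraMap_eq_smul_one]
      exact hnu
    have := (hP _ hms).1
    simp only [Complex.neg_re] at this
    linarith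
  have hD0 : D = 0 := by
    have h0 : (aeval (-P) Q.charpoly) * D = (aeval (-P) Q.charpoly) * 0 := by
      rw [key, mul_zero]
    exact hunit.mul_left_cancel h0
  have : P - Q = 0 := hD ▸ hD0
  exact sub_eq_zero.mp this

lemma eq_zero_of_trace_conjTranspose_mul_self {C : Matrix (Fin n) (Fin n) ℂ}
    (h : Matrix.trace (Cᴴ * C) = 0) : C = 0 := by
  have htr : Matrix.trace (Cᴴ * C) = ((∑ j, ∑ i, Complex.normSq (C i j) : ℝ) : ℂ) := by
    rw [Matrix.trace]
    push_cast
    refine Finset.sum_congr rfl fun j _ => ?_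
    rw [Matrix.diag_apply, Matrix.mul_apply]
    refine Finset.sum_congr rfl fun i _ => ?_
    rw [Matrix.conjTranspose_apply]
    simp [Complex.normSq_eq_conj_mul_self, Complex.ext_iff]
  rw [htr] at h
  have hsum : (∑ j, ∑ i, Complex.normSq (C i j) : ℝ) = 0 := by exact_mod_cast h
  ext i j
  have h1 : ∀ j ∈ Finset.univ, (0:ℝ) ≤ ∑ i, Complex.normSq (C i j) :=
    fun j _ => Finset.sum_nonneg fun i _ => Complex.normSq_nonneg _
  have h2 := (Finset.sum_eq_zero_iff_of_nonneg h1).mp hsum j (Finset.mem_univ j)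
  have h3 := (Finset.sum_eq_zero_iff_of_nonneg
    (fun i _ => Complex.normSq_nonneg (C i j))).mp h2 i (Finset.mem_univ i)
  simpa using Complex.normSq_eq_zero.mp h3

lemma commute_sqrt {g M : Matrix (Fin n) (Fin n) ℂ} (hg : IsUnit g) (hMpd : M.PosDef)
    (hMps : M.PosSemidef) (hc : g * M = M * g) : g * hMps.sqrt = hMps.sqrt * g := by
  have hgdet : IsUnit g.det := (Matrix.isUnit_iff_isUnit_det g).mp hg
  set N := hMps.sqrt with hN
  have hNN : N * N = M := hMps.sqrt_mul_self
  have hNpd : N.PosDef := posDef_of_isUnit hMps.posSemidef_sqrt (sqrt_isUnit hMps hMpd.isUnit)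
  have hsq : (g * N * g⁻¹) * (g * N * g⁻¹) = N * N := by
    calc (g * N * g⁻¹) * (g * N * g⁻¹) = g * N * (g⁻¹ * g) * N * g⁻¹ := by noncomm_ring
      _ = g * (N * N) * g⁻¹ := by rw [Matrix.nonsing_inv_mul g hgdet]; noncomm_ring
      _ = g * M * g⁻¹ := by rw [hNN]
      _ = M * (g * g⁻¹) := by rw [hc, Matrix.mul_assoc]
      _ = N * N := by rw [Matrix.mul_nonsing_inv g hgdet, mul_one, hNN]
  have hkey := sqrt_unique (hasPosSpectrum_conj hg (hasPosSpectrum_of_posDef hNpd))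
    (hasPosSpectrum_of_posDef hNpd) hsq
  calc g * N = (g * N * g⁻¹) * g := by
        rw [Matrix.mul_assoc, Matrix.nonsing_inv_mul g hgdet, mul_one]
    _ = N * g := by rw [hkey]

/-- equality `a²A + b²B + 2ab(A ♮ B) = W_{a,b}(A,B)` holds iff
`A` and `B` commute. -/
theorem spectral_heron_equality_iff_commute {n : ℕ}
    (A B S T : Matrix (Fin n) (Fin n) ℂ)
    (hA : A.PosDef) (hB : B.PosDef) (a b : ℝ) (ha : 0 < a) (hb : 0 < b)
    (hS : IsPrincipalSqrt (A * B) S) (hT : IsPrincipalSqrt (B * A) T) :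
    ((a : ℂ) ^ 2) • A + ((b : ℂ) ^ 2) • B + (2 * (a : ℂ) * b) • specMean hA hB
        = ((a : ℂ) ^ 2) • A + ((b : ℂ) ^ 2) • B + ((a : ℂ) * b) • (S + T)
      ↔ A * B = B * A := by
  classical
  have hAdet : IsUnit A.det := (Matrix.isUnit_iff_isUnit_det A).mp hA.isUnit
  -- Q = sqrt (A⁻¹)
  set Q : Matrix (Fin n) (Fin n) ℂ := hA.inv.posSemidef.sqrt with hQdef
  have hQpd : Q.PosDef := sqrt_posDef hA.inv
  have hQu : IsUnit Q := hQpd.isUnit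
  have hQdet : IsUnit Q.det := (Matrix.isUnit_iff_isUnit_det Q).mp hQu
  have hQQ : Q * Q = A⁻¹ := hA.inv.posSemidef.sqrt_mul_self
  -- sandwich W = Q⁻¹ B Q⁻¹ and R = sqrt W
  have hWps : (Q⁻¹ * B * Q⁻¹).PosSemidef :=
    sandwich_posSemidef hA.inv.posSemidef.posSemidef_sqrt.isHermitian.inv hB.posSemidef
  have hQiu : IsUnit Q⁻¹ := Matrix.isUnit_nonsing_inv_iff.mpr hQu
  have hWu : IsUnit (Q⁻¹ * B * Q⁻¹) := (hQiu.mul hB.isUnit).mul hQiu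
  have hWpd : (Q⁻¹ * B * Q⁻¹).PosDef := posDef_of_isUnit hWps hWu
  set R : Matrix (Fin n) (Fin n) ℂ := hWps.sqrt with hRdef
  have hRR : R * R = Q⁻¹ * B * Q⁻¹ := hWps.sqrt_mul_self
  have hRu : IsUnit R := sqrt_isUnit hWps hWu
  -- X = geomMean hA.inv hB
  set X : Matrix (Fin n) (Fin n) ℂ := geomMean hA.inv hB with hXdef
  have hX : X = Q * R * Q := rfl
  have hXps : X.PosSemidef := geomMean_posSemidef hA.inv hB
  have hXu : IsUnit X := by rw [hX]; exact (hQu.mul hRu).mul hQu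
  have hXpd : X.PosDef := posDef_of_isUnit hXps hXu
  -- Q A Q = 1 and X A X = B
  have hQAQ : Q * A * Q = 1 := by
    have hAinv : A = Q⁻¹ * Q⁻¹ := by
      calc A = (A⁻¹)⁻¹ := (Matrix.nonsing_inv_nonsing_inv A hAdet).symm
        _ = (Q * Q)⁻¹ := by rw [hQQ]
        _ = Q⁻¹ * Q⁻¹ := Matrix.mul_inv_rev Q Q
    rw [hAinv, ← Matrix.mul_assoc, Matrix.mul_nonsing_inv Q hQdet, Matrix.one_mul,
      Matrix.nonsing_inv_mul Q hQdet]
  have hXAX : X * A * X = B := by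
    rw [hX]
    have e1 : (Q * R * Q) * A * (Q * R * Q) = Q * R * (Q * A * Q) * R * Q := by noncomm_ring
    rw [e1, hQAQ, mul_one, Matrix.mul_assoc Q R R, hRR]
    have e3 : Q * (Q⁻¹ * B * Q⁻¹) * Q = (Q * Q⁻¹) * B * (Q⁻¹ * Q) := by noncomm_ring
    rw [e3, Matrix.mul_nonsing_inv Q hQdet, Matrix.nonsing_inv_mul Q hQdet, one_mul, mul_one]
  -- U = sqrt X and specMean = U A U
  set U : Matrix (Fin n) (Fin n) ℂ := (geomMean_posSemidef hA.inv hB).sqrt with hUdef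
  have hMdef : specMean hA hB = U * A * U := rfl
  have hUU : U * U = X := (geomMean_posSemidef hA.inv hB).sqrt_mul_self
  have hUh : U.IsHermitian := (geomMean_posSemidef hA.inv hB).posSemidef_sqrt.isHermitian
  -- SA = sqrt A
  set SA : Matrix (Fin n) (Fin n) ℂ := hA.posSemidef.sqrt with hSAdef
  have hSApd : SA.PosDef := sqrt_posDef hA
  have hSAdet : IsUnit SA.det := (Matrix.isUnit_iff_isUnit_det SA).mp hSApd.isUnit
  have hSASA : SA * SA = A := hA.posSemidef.sqrt_mul_self
  have hKps : (SA * X * SA).PosSemidef :=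
    sandwich_posSemidef hA.posSemidef.posSemidef_sqrt.isHermitian hXps
  have hKu : IsUnit (SA * X * SA) := (hSApd.isUnit.mul hXu).mul hSApd.isUnit
  have hKpd : (SA * X * SA).PosDef := posDef_of_isUnit hKps hKu
  have hAXspec : HasPosSpectrum (A * X) := by
    have e : A * X = SA * (SA * X * SA) * SA⁻¹ := by
      have e2 : SA * (SA * X * SA) * SA⁻¹ = (SA * SA) * X * (SA * SA⁻¹) := by noncomm_ring
      rw [e2, hSASA, Matrix.mul_nonsing_inv SA hSAdet, mul_one]
    rw [e]
    exact hasPosSpectrum_conj hSApd.isUnit (hasPosSpectrum_of_posDef hKpd)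
  have hXAspec : HasPosSpectrum (X * A) := by
    have e : X * A = SA⁻¹ * (SA * X * SA) * (SA⁻¹)⁻¹ := by
      rw [Matrix.nonsing_inv_nonsing_inv SA hSAdet]
      have e2 : SA⁻¹ * (SA * X * SA) * SA = (SA⁻¹ * SA) * X * (SA * SA) := by noncomm_ring
      rw [e2, Matrix.nonsing_inv_mul SA hSAdet, one_mul, hSASA]
    rw [e]
    exact hasPosSpectrum_conj (Matrix.isUnit_nonsing_inv_iff.mpr hSApd.isUnit)
      (hasPosSpectrum_of_posDef hKpd)
  have hSeq : S = A * X := by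
    apply sqrt_unique hS.2 hAXspec
    rw [hS.1]
    have e : (A * X) * (A * X) = A * (X * A * X) := by noncomm_ring
    rw [e, hXAX]
  have hTeq : T = X * A := by
    apply sqrt_unique hT.2 hXAspec
    rw [hT.1]
    have e : (X * A) * (X * A) = (X * A * X) * A := by noncomm_ring
    rw [e, hXAX]
  -- reduce the matrix equation
  have hab : ((a : ℂ) * b) ≠ 0 :=
    mul_ne_zero (Complex.ofReal_ne_zero.mpr ha.ne') (Complex.ofReal_ne_zero.mpr hb.ne')
  have hsc : (2 * (a : ℂ) * b) • specMean hA hB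
      = ((a : ℂ) * b) • (specMean hA hB + specMean hA hB) := by
    rw [smul_add, ← add_smul]
    congr 1
    ring
  have hiff1 : (((a : ℂ) ^ 2) • A + ((b : ℂ) ^ 2) • B + (2 * (a : ℂ) * b) • specMean hA hB
        = ((a : ℂ) ^ 2) • A + ((b : ℂ) ^ 2) • B + ((a : ℂ) * b) • (S + T))
      ↔ specMean hA hB + specMean hA hB = S + T := by
    rw [add_right_inj, hsc]
    exact ⟨fun h => smul_right_injective _ hab h, fun h => by rw [h]⟩
  rw [hiff1, hMdef, hSeq, hTeq]
  constructor
  · intro heq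
    set C : Matrix (Fin n) (Fin n) ℂ := A * U - U * A with hC
    have hCU : C * U = U * C := by
      have e : C * U - U * C = (A * (U * U) + (U * U) * A) - (U * A * U + U * A * U) := by
        rw [hC]; noncomm_ring
      rw [hUU, heq, sub_self] at e
      exact sub_eq_zero.mp e
    have hCherm : Cᴴ = -C := by
      rw [hC, Matrix.conjTranspose_sub, Matrix.conjTranspose_mul, Matrix.conjTranspose_mul,
        hA.isHermitian.eq, hUh.eq, neg_sub]
    have htr : Matrix.trace (Cᴴ * C) = 0 := by
      rw [hCherm, Matrix.neg_mul, Matrix.trace_neg, neg_eq_zero]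
      have e : C * C = A * (U * C) - U * (A * C) := by rw [hC]; noncomm_ring
      rw [e, Matrix.trace_sub]
      have e2 : Matrix.trace (U * (A * C)) = Matrix.trace (A * (U * C)) := by
        rw [Matrix.trace_mul_comm, Matrix.mul_assoc, hCU]
      rw [e2, sub_self]
    have hC0 : C = 0 := eq_zero_of_trace_conjTranspose_mul_self htr
    have hAU : A * U = U * A := by
      have : A * U - U * A = 0 := hC ▸ hC0
      exact sub_eq_zero.mp this
    have hAX : A * X = X * A := by
      rw [← hUU, ← Matrix.mul_assoc, hAU, Matrix.mul_assoc, hAU, ← Matrix.mul_assoc]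
    rw [← hXAX]
    have e : A * (X * A * X) = (A * X) * (A * X) := by noncomm_ring
    have e2 : (X * A * X) * A = (X * A) * (X * A) := by noncomm_ring
    rw [e, e2, hAX]
  · intro hcomm
    have cQ : A * Q = Q * A := by
      apply commute_sqrt hA.isUnit hA.inv hA.inv.posSemidef
      rw [Matrix.mul_nonsing_inv A hAdet, Matrix.nonsing_inv_mul A hAdet]
    have cQi : A * Q⁻¹ = Q⁻¹ * A := by
      calc A * Q⁻¹ = (Q⁻¹ * Q) * (A * Q⁻¹) := by
            rw [Matrix.nonsing_inv_mul Q hQdet, one_mul]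
        _ = Q⁻¹ * (Q * A) * Q⁻¹ := by noncomm_ring
        _ = Q⁻¹ * (A * Q) * Q⁻¹ := by rw [cQ]
        _ = (Q⁻¹ * A) * (Q * Q⁻¹) := by noncomm_ring
        _ = Q⁻¹ * A := by rw [Matrix.mul_nonsing_inv Q hQdet, mul_one]
    have cW : A * (Q⁻¹ * B * Q⁻¹) = (Q⁻¹ * B * Q⁻¹) * A := by
      calc A * (Q⁻¹ * B * Q⁻¹) = (A * Q⁻¹) * B * Q⁻¹ := by noncomm_ring
        _ = Q⁻¹ * (A * B) * Q⁻¹ := by rw [cQi]; noncomm_ring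
        _ = Q⁻¹ * (B * A) * Q⁻¹ := by rw [hcomm]
        _ = Q⁻¹ * B * (A * Q⁻¹) := by noncomm_ring
        _ = Q⁻¹ * B * (Q⁻¹ * A) := by rw [cQi]
        _ = (Q⁻¹ * B * Q⁻¹) * A := by noncomm_ring
    have cR : A * R = R * A := commute_sqrt hA.isUnit hWpd hWps cW
    have cX : A * X = X * A := by
      rw [hX]
      calc A * (Q * R * Q) = (A * Q) * R * Q := by noncomm_ring
        _ = (Q * A) * R * Q := by rw [cQ]
        _ = Q * (A * R) * Q := by noncomm_ring
        _ = Q * (R * A) * Q := by rw [cR]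
        _ = Q * R * (A * Q) := by noncomm_ring
        _ = Q * R * (Q * A) := by rw [cQ]
        _ = (Q * R * Q) * A := by noncomm_ring
    have cU : A * U = U * A := commute_sqrt hA.isUnit hXpd (geomMean_posSemidef hA.inv hB) cX
    have h1 : U * A * U = A * X := by
      rw [← cU, Matrix.mul_assoc, hUU]
    have h2 : U * A * U = X * A := by
      rw [Matrix.mul_assoc, cU, ← Matrix.mul_assoc, hUU]
    rw [h1, cX]

end Heron
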